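/- arXiv:1706.00147 — 2 statements merged into one kernel-verified Lean document; each statement's English description precedes it below -/
import Mathlib

section
/- Let n ≥ 1, let 0 < α < β < 1, and set k := 2αβ/(β−α). Suppose f : ℝⁿ → ℝ is bounded, globally β-Hölder continuous (there is A > 0 with |f(x)−f(y)| ≤ A|x−y|^β for all x,y ∈ ℝⁿ), and satisfies |f(x)| ≤ A|x|^{−k} for all |x| ≥ 1. Then the function g defined on ℝⁿ∖{0} by g(x) := f(x/|x|²), extended by g(0) := 0, is α-Hölder continuous on a neighborhood of the origin: there exist r > 0 and L > 0 such that |g(x) − g(y)| ≤ L|x−y|^α for all x, y in the closed ball of radius r centered at 0. -/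
open Metric

/-- **Hölder regularity under inversion.**  If `f : ℝⁿ → ℝ` is bounded, globally
`β`-Hölder, and decays like `|x|^{-k}` with `k = 2αβ/(β-α)`, then the spherical
inversion `g(x) = f(x/|x|²)` (with `g 0 = 0`) is `α`-Hölder near the origin. -/
theorem holder_regularity_under_inversion
    (n : ℕ) (hn : 1 ≤ n) (α β k : ℝ)
    (hα : 0 < α) (hαβ : α < β) (hβ : β < 1)
    (hk : k = 2 * α * β / (β - α))
    (f : EuclideanSpace ℝ (Fin n) → ℝ) (A : ℝ) (hA : 0 < A)
    (hbdd : ∀ x, |f x| ≤ A)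
    (hHolder : ∀ x y, |f x - f y| ≤ A * ‖x - y‖ ^ β)
    (hdecay : ∀ x, 1 ≤ ‖x‖ → |f x| ≤ A * ‖x‖ ^ (-k))
    (g : EuclideanSpace ℝ (Fin n) → ℝ)
    (hg0 : g 0 = 0)
    (hg : ∀ x, x ≠ 0 → g x = f ((‖x‖ ^ 2)⁻¹ • x)) :
    ∃ r > (0 : ℝ), ∃ L > (0 : ℝ),
      ∀ x ∈ closedBall (0 : EuclideanSpace ℝ (Fin n)) r,
        ∀ y ∈ closedBall (0 : EuclideanSpace ℝ (Fin n)) r,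
          |g x - g y| ≤ L * ‖x - y‖ ^ α := by
  have hβ0 : 0 < β := hα.trans hαβ
  have hβα : 0 < β - α := sub_pos.2 hαβ
  have hk0 : 0 < k := by rw [hk]; positivity
  have hαk : α ≤ k := by
    rw [hk, le_div_iff₀ hβα]; nlinarith
  set t : ℝ := 2 * β / (β - α) with ht
  have ht0 : 0 < t := by positivity
  have htk : k = t * α := by rw [hk, ht]; ring
  have ht1 : 1 ≤ t := by rw [ht, le_div_iff₀ hβα]; nlinarith
  have ht2 : t * (β - α) = 2 * β := by rw [ht, div_mul_cancel₀ _ hβα.ne']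
  -- norm of the inversion of a nonzero point
  have hinv_norm : ∀ x : EuclideanSpace ℝ (Fin n), x ≠ 0 →
      ‖(‖x‖ ^ 2)⁻¹ • x‖ = ‖x‖⁻¹ := by
    intro x hx
    have hx0 : (0:ℝ) < ‖x‖ := norm_pos_iff.2 hx
    rw [norm_smul, norm_inv, norm_pow, norm_norm, sq, mul_inv, mul_assoc,
      inv_mul_cancel₀ hx0.ne', mul_one]
  -- distance between inversions
  have hinv_dist : ∀ x y : EuclideanSpace ℝ (Fin n), x ≠ 0 → y ≠ 0 →
      ‖(‖x‖ ^ 2)⁻¹ • x - (‖y‖ ^ 2)⁻¹ • y‖ = ‖x - y‖ / (‖x‖ * ‖y‖) := by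
    intro x y hx hy
    have h := dist_div_norm_sq_smul hx hy 1
    simp only [one_div, inv_pow, one_pow, dist_eq_norm] at h
    rw [h, inv_mul_eq_div]
  -- decay bound for g
  have hgdecay : ∀ x : EuclideanSpace ℝ (Fin n), x ≠ 0 → ‖x‖ ≤ 1 →
      |g x| ≤ A * ‖x‖ ^ k := by
    intro x hx hx1
    have hx0 : (0:ℝ) < ‖x‖ := norm_pos_iff.2 hx
    rw [hg x hx]
    have h1 : (1:ℝ) ≤ ‖(‖x‖ ^ 2)⁻¹ • x‖ := by
      rw [hinv_norm x hx]
      exact (one_le_inv₀ hx0).2 hx1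
    have h2 := hdecay _ h1
    rw [hinv_norm x hx] at h2
    have h3 : ‖x‖⁻¹ ^ (-k) = ‖x‖ ^ k := by
      rw [← Real.rpow_neg_one, ← Real.rpow_mul hx0.le]
      norm_num
    rwa [h3] at h2
  set L : ℝ := A * (1 + (2:ℝ) ^ k) with hL
  have hL0 : 0 < L := by positivity
  have hAL : A ≤ L := by
    nlinarith [Real.rpow_pos_of_pos (by norm_num : (0:ℝ) < 2) k]
  refine ⟨1/2, by norm_num, L, hL0, ?_⟩
  -- key asymmetric estimate
  have key : ∀ x y : EuclideanSpace ℝ (Fin n), ‖x‖ ≤ 1/2 → ‖y‖ ≤ 1/2 → ‖x‖ ≤ ‖y‖ →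
      |g x - g y| ≤ L * ‖x - y‖ ^ α := by
    intro x y hx hy hxy
    by_cases hxy0 : x = y
    · subst hxy0; simp only [sub_self, abs_zero]; positivity
    have hd0 : (0:ℝ) < ‖x - y‖ := by
      rw [norm_pos_iff]; exact sub_ne_zero.2 hxy0
    set d := ‖x - y‖ with hd
    have hd1 : d ≤ 1 := by
      have := norm_sub_le x y
      linarith
    have hy0 : y ≠ 0 := by
      intro h
      apply hxy0
      rw [h] at hxy ⊢
      simpa using le_antisymm (by simpa using hxy) (norm_nonneg x)
    have hyn : (0:ℝ) < ‖y‖ := norm_pos_iff.2 hy0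
    by_cases hx0 : x = 0
    · -- x = 0 case
      subst hx0
      rw [hg0, zero_sub, abs_neg]
      have hdy : d = ‖y‖ := by rw [hd, zero_sub, norm_neg]
      have h1 : |g y| ≤ A * ‖y‖ ^ k := hgdecay y hy0 (by linarith)
      have h2 : ‖y‖ ^ k ≤ ‖y‖ ^ α :=
        Real.rpow_le_rpow_of_exponent_ge hyn (by linarith) hαk
      calc |g y| ≤ A * ‖y‖ ^ α := h1.trans (mul_le_mul_of_nonneg_left h2 hA.le)
        _ ≤ L * d ^ α := by
            rw [hdy]
            exact mul_le_mul_of_nonneg_right hAL (Real.rpow_nonneg hyn.le α)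
    · have hxn : (0:ℝ) < ‖x‖ := norm_pos_iff.2 hx0
      rw [hg x hx0, hg y hy0]
      by_cases hcase : d ≤ ‖x‖ ^ t
      · -- close case: use Hölder continuity of f
        have hH := hHolder ((‖x‖ ^ 2)⁻¹ • x) ((‖y‖ ^ 2)⁻¹ • y)
        rw [hinv_dist x y hx0 hy0] at hH
        have hquot : d / (‖x‖ * ‖y‖) ≤ d / (‖x‖ * ‖x‖) := by
          apply div_le_div_of_nonneg_left hd0.le (by positivity)
          nlinarith
        have hstep : (d / (‖x‖ * ‖x‖)) ^ β ≤ d ^ α := by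
          rw [Real.div_rpow hd0.le (by positivity)]
          rw [div_le_iff₀ (Real.rpow_pos_of_pos (by positivity) β)]
          have e1 : d ^ β = d ^ α * d ^ (β - α) := by
            rw [← Real.rpow_add hd0]; ring_nf
          rw [e1]
          have e2 : d ^ (β - α) ≤ (‖x‖ ^ t) ^ (β - α) :=
            Real.rpow_le_rpow hd0.le hcase hβα.le
          have e3 : (‖x‖ ^ t) ^ (β - α) = (‖x‖ * ‖x‖) ^ β := by
            rw [← Real.rpow_mul (norm_nonneg x), ht2, ← sq, ← Real.rpow_natCast ‖x‖ 2,
              ← Real.rpow_mul (norm_nonneg x)]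
            norm_num
          exact mul_le_mul_of_nonneg_left (e3 ▸ e2) (Real.rpow_nonneg hd0.le α)
        have hmono : (d / (‖x‖ * ‖y‖)) ^ β ≤ (d / (‖x‖ * ‖x‖)) ^ β :=
          Real.rpow_le_rpow (by positivity) hquot hβ0.le
        calc |f ((‖x‖ ^ 2)⁻¹ • x) - f ((‖y‖ ^ 2)⁻¹ • y)| ≤ A * (d / (‖x‖ * ‖y‖)) ^ β := hH
          _ ≤ A * d ^ α := mul_le_mul_of_nonneg_left (hmono.trans hstep) hA.le
          _ ≤ L * d ^ α := mul_le_mul_of_nonneg_right hAL (Real.rpow_nonneg hd0.le α)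
      · -- far case: use decay
        push_neg at hcase
        have hxk : ‖x‖ ^ k ≤ d ^ α := by
          rw [htk, Real.rpow_mul (norm_nonneg x)]
          exact Real.rpow_le_rpow (Real.rpow_nonneg (norm_nonneg x) t) hcase.le hα.le
        have hmd : ‖x‖ ≤ d ^ (1/t) := by
          have h1 : (‖x‖ ^ t) ^ (1/t) ≤ d ^ (1/t) :=
            Real.rpow_le_rpow (Real.rpow_nonneg (norm_nonneg x) t) hcase.le (by positivity)
          rwa [← Real.rpow_mul (norm_nonneg x), mul_one_div, div_self ht0.ne',
            Real.rpow_one] at h1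
        have hdd : d ≤ d ^ (1/t) := by
          nth_rewrite 1 [← Real.rpow_one d]
          apply Real.rpow_le_rpow_of_exponent_ge hd0 hd1
          rw [div_le_one ht0]; linarith
        have hyd : ‖y‖ ≤ 2 * d ^ (1/t) := by
          have h4 := norm_sub_norm_le y x
          rw [norm_sub_rev] at h4
          linarith
        have hyk : ‖y‖ ^ k ≤ (2:ℝ) ^ k * d ^ α := by
          calc ‖y‖ ^ k ≤ (2 * d ^ (1/t)) ^ k :=
                Real.rpow_le_rpow (norm_nonneg y) hyd hk0.le
            _ = (2:ℝ) ^ k * (d ^ (1/t)) ^ k := by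
                rw [Real.mul_rpow (by norm_num) (Real.rpow_nonneg hd0.le _)]
            _ = (2:ℝ) ^ k * d ^ α := by
                rw [← Real.rpow_mul hd0.le]
                congr 1
                rw [htk]; field_simp
        have hDx : |f ((‖x‖ ^ 2)⁻¹ • x)| ≤ A * ‖x‖ ^ k := by
          have := hgdecay x hx0 (by linarith)
          rwa [hg x hx0] at this
        have hDy : |f ((‖y‖ ^ 2)⁻¹ • y)| ≤ A * ‖y‖ ^ k := by
          have := hgdecay y hy0 (by linarith)
          rwa [hg y hy0] at this
        calc |f ((‖x‖ ^ 2)⁻¹ • x) - f ((‖y‖ ^ 2)⁻¹ • y)|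
            ≤ |f ((‖x‖ ^ 2)⁻¹ • x)| + |f ((‖y‖ ^ 2)⁻¹ • y)| := abs_sub _ _
          _ ≤ A * ‖x‖ ^ k + A * ‖y‖ ^ k := add_le_add hDx hDy
          _ ≤ A * d ^ α + A * ((2:ℝ) ^ k * d ^ α) :=
              add_le_add (mul_le_mul_of_nonneg_left hxk hA.le)
                (mul_le_mul_of_nonneg_left hyk hA.le)
          _ = L * d ^ α := by rw [hL]; ring
  intro x hx y hy
  rw [mem_closedBall, dist_zero_right] at hx hy
  rcases le_total ‖x‖ ‖y‖ with h | h
  · exact key x y hx hy h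
  · rw [abs_sub_comm, norm_sub_rev]
    exact key y x hy hx h
end

section
/- Let n ≥ 1, let U ⊆ ℝⁿ be measurable, let 1 < p ≤ ∞ with conjugate exponent q (1/p + 1/q = 1, so q = 1 when p = ∞), and let s > 0 satisfy qs < n. Then there is a constant C depending only on n, p, q, s such that for every ω ∈ L¹(U) ∩ L^p(U): sup over x ∈ ℝⁿ of ∫_U |ω(y)|/|x−y|^s dy ≤ C · ‖ω‖_{L^p(U)}^{qs/n} · ‖ω‖_{L¹(U)}^{(n−qs)/n}. -/
open MeasureTheory ENNReal

open Metric Set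


lemma shell_index {t : ℝ} (ht : 0 < t) (ht1 : t < 1) :
    ∃ k : ℕ, (2:ℝ)⁻¹ ^ (k+1) < t ∧ t ≤ (2:ℝ)⁻¹ ^ k := by
  have h2 : (2:ℝ)⁻¹ < 1 := by norm_num
  obtain ⟨m, hm⟩ := exists_pow_lt_of_lt_one ht h2
  have hP : ∃ k, (2:ℝ)⁻¹ ^ (k+1) < t := by
    refine ⟨m, lt_of_le_of_lt ?_ hm⟩
    exact pow_le_pow_of_le_one (by norm_num) h2.le (Nat.le_succ m)
  classical
  let k := Nat.find hP
  refine ⟨k, Nat.find_spec hP, ?_⟩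
  rcases Nat.eq_zero_or_pos k with hk | hk
  · rw [hk]; simpa using ht1.le
  · have := Nat.find_min hP (m := k - 1) (by omega)
    push_neg at this
    have hk1 : k - 1 + 1 = k := by omega
    rwa [hk1] at this

lemma ball_rpow_bound' (n : ℕ) (hn : 1 ≤ n) (a : ℝ) (ha : 0 < a) (han : a < n) :
    ∃ K > (0:ℝ), ∀ (x : EuclideanSpace ℝ (Fin n)), ∀ R > (0:ℝ),
      (∫⁻ y in ball x R, ENNReal.ofReal (‖x - y‖ ^ (-a)))
        ≤ ENNReal.ofReal (K * R ^ (n - a)) := by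
  classical
  set b : ℝ := (2:ℝ)⁻¹ with hbdef
  have hb0 : (0:ℝ) < b := by norm_num
  have hb1 : b < 1 := by norm_num
  set V : ℝ := (volume (ball (0:EuclideanSpace ℝ (Fin n)) 1)).toReal with hVdef
  have hV0 : 0 ≤ V := ENNReal.toReal_nonneg
  set ρ : ℝ := b ^ ((n:ℝ) - a) with hρdef
  have hρ0 : 0 < ρ := Real.rpow_pos_of_pos hb0 _
  have hρ1 : ρ < 1 := by
    apply Real.rpow_lt_one hb0.le hb1
    have : (a:ℝ) < (n:ℝ) := han
    linarith
  have h1ρ : (0:ℝ) < 1 - ρ := by linarith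
  have h2a : (0:ℝ) < 2 ^ a := Real.rpow_pos_of_pos (by norm_num) a
  refine ⟨(V + 1) * 2 ^ a * (1 - ρ)⁻¹,
    mul_pos (mul_pos (by linarith) h2a) (inv_pos.mpr h1ρ), ?_⟩
  intro x R hR
  set f : EuclideanSpace ℝ (Fin n) → ℝ≥0∞ := fun y => ENNReal.ofReal (‖x - y‖ ^ (-a)) with hfdef
  set S : ℕ → Set (EuclideanSpace ℝ (Fin n)) :=
    fun k => closedBall x (R * b ^ k) \ closedBall x (R * b ^ (k+1)) with hSdef
  have hcover : ball x R ⊆ {x} ∪ ⋃ k, S k := by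
    intro y hy
    rcases eq_or_ne y x with h | h
    · exact Or.inl (by simp [h])
    · right
      have hd0 : 0 < dist y x := dist_pos.mpr h
      have hdR : dist y x < R := mem_ball.mp hy
      obtain ⟨k, hk1, hk2⟩ := shell_index (t := dist y x / R)
        (div_pos hd0 hR) ((div_lt_one hR).mpr hdR)
      refine mem_iUnion.mpr ⟨k, ?_, ?_⟩
      · have h1 : dist y x ≤ (2:ℝ)⁻¹ ^ k * R := (div_le_iff₀ hR).mp hk2
        have : dist y x ≤ R * b ^ k := by rw [mul_comm] at h1; exact h1
        exact mem_closedBall.mpr this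
      · intro hmem
        have h3 : dist y x ≤ R * b ^ (k+1) := mem_closedBall.mp hmem
        have h4 : (2:ℝ)⁻¹ ^ (k+1) * R < dist y x := (lt_div_iff₀ hR).mp hk1
        rw [mul_comm] at h4
        have : R * b ^ (k+1) < dist y x := h4
        linarith
  have hmono := lintegral_mono_set (μ := volume) (f := f) hcover
  have hsplit : (∫⁻ y in ({x} ∪ ⋃ k, S k), f y) ≤
      (∫⁻ y in ({x} : Set _), f y) + ∫⁻ y in (⋃ k, S k), f y := by
    have := Measure.restrict_union_le (μ := volume) ({x} : Set (EuclideanSpace ℝ (Fin n))) (⋃ k, S k)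
    exact (lintegral_mono' this le_rfl).trans_eq (lintegral_add_measure _ _ _)
  have hsing : (∫⁻ y in ({x} : Set (EuclideanSpace ℝ (Fin n))), f y) = 0 := by
    have : ∀ y ∈ ({x} : Set (EuclideanSpace ℝ (Fin n))), f y ≤ 0 := by
      intro y hy
      simp only [mem_singleton_iff] at hy
      simp [hfdef, hy, Real.zero_rpow (neg_ne_zero.mpr ha.ne')]
    exact le_antisymm ((setLIntegral_mono' (measurableSet_singleton x) this).trans (by simp)) (zero_le)
  have hunion : (∫⁻ y in (⋃ k, S k), f y) ≤ ∑' k, ∫⁻ y in S k, f y :=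
    lintegral_iUnion_le _ _
  -- per-shell bound
  set c : ℕ → ℝ := fun k => (R * b ^ (k+1)) ^ (-a) * ((R * b ^ k) ^ n * V) with hcdef
  have hc0 : ∀ k, 0 ≤ c k := by
    intro k
    have : (0:ℝ) < R * b ^ (k+1) := by positivity
    positivity
  have hshell : ∀ k, (∫⁻ y in S k, f y) ≤ ENNReal.ofReal (c k) := by
    intro k
    have hrk : (0:ℝ) < R * b ^ (k+1) := by positivity
    have hbound : ∀ y ∈ S k, f y ≤ ENNReal.ofReal ((R * b ^ (k+1)) ^ (-a)) := by
      intro y hy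
      have h1 : R * b ^ (k+1) < dist y x := by
        have := hy.2
        simp only [mem_closedBall, not_le] at this
        exact this
      have hxy : ‖x - y‖ = dist y x := by rw [dist_eq_norm, norm_sub_rev]
      apply ENNReal.ofReal_le_ofReal
      rw [hxy]
      exact Real.rpow_le_rpow_of_nonpos hrk h1.le (neg_nonpos.mpr ha.le)
    have hSm : MeasurableSet (S k) :=
      measurableSet_closedBall.diff measurableSet_closedBall
    calc (∫⁻ y in S k, f y)
        ≤ ∫⁻ _ in S k, ENNReal.ofReal ((R * b ^ (k+1)) ^ (-a)) :=
          setLIntegral_mono' hSm hbound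
      _ = ENNReal.ofReal ((R * b ^ (k+1)) ^ (-a)) * volume (S k) := setLIntegral_const _ _
      _ ≤ ENNReal.ofReal ((R * b ^ (k+1)) ^ (-a)) * volume (closedBall x (R * b ^ k)) := by
          gcongr
          exact diff_subset
      _ = ENNReal.ofReal (c k) := by
          rw [Measure.addHaar_closedBall _ _ (by positivity)]
          have hfr : Module.finrank ℝ (EuclideanSpace ℝ (Fin n)) = n :=
            finrank_euclideanSpace_fin
          rw [hfr]
          rw [show (volume (ball (0:EuclideanSpace ℝ (Fin n)) 1)) = ENNReal.ofReal V from
            (ENNReal.ofReal_toReal (measure_ball_lt_top).ne).symm]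
          rw [← ENNReal.ofReal_mul (by positivity), ← ENNReal.ofReal_mul (by positivity)]
  -- closed form for c k
  have hck : ∀ k, c k = (V * 2 ^ a * R ^ ((n:ℝ) - a)) * ρ ^ k := by
    intro k
    have hbk : ∀ m : ℕ, ((b ^ m : ℝ)) = b ^ ((m:ℝ)) := fun m => (Real.rpow_natCast b m).symm
    have e1 : (R * b ^ (k+1)) ^ (-a) = R ^ (-a) * b ^ (-(((k:ℝ)+1) * a)) := by
      rw [Real.mul_rpow hR.le (by positivity), hbk (k+1), ← Real.rpow_mul hb0.le]
      push_cast
      ring_nf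
    have e2 : ((R * b ^ k) ^ n : ℝ) = R ^ ((n:ℝ)) * b ^ ((k:ℝ) * n) := by
      rw [mul_pow, ← Real.rpow_natCast R n, ← Real.rpow_natCast (b ^ k) n, hbk k,
        ← Real.rpow_mul hb0.le]
    have e3 : (ρ : ℝ) ^ k = b ^ ((k:ℝ) * ((n:ℝ) - a)) := by
      rw [hρdef, ← Real.rpow_natCast (b ^ ((n:ℝ) - a)) k, ← Real.rpow_mul hb0.le]
      ring_nf
    rw [hcdef]
    simp only
    rw [e1, e2, e3]
    have e4 : R ^ (-a) * R ^ ((n:ℝ)) = R ^ ((n:ℝ) - a) := by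
      rw [← Real.rpow_add hR]; ring_nf
    have e5 : b ^ (-(((k:ℝ)+1) * a)) * b ^ ((k:ℝ) * n) = b ^ (-a) * b ^ ((k:ℝ) * ((n:ℝ) - a)) := by
      rw [← Real.rpow_add hb0, ← Real.rpow_add hb0]; ring_nf
    have e6 : b ^ (-a) = 2 ^ a := by
      rw [hbdef, ← Real.rpow_neg_one 2, ← Real.rpow_mul (by norm_num)]
      ring_nf
    calc R ^ (-a) * b ^ (-((↑k + 1) * a)) * (R ^ ((n:ℝ)) * b ^ ((k:ℝ) * ↑n) * V)
        = (R ^ (-a) * R ^ ((n:ℝ))) * (b ^ (-((↑k + 1) * a)) * b ^ ((k:ℝ) * ↑n)) * V := by ring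
      _ = R ^ ((n:ℝ) - a) * (b ^ (-a) * b ^ ((k:ℝ) * ((n:ℝ) - a))) * V := by rw [e4, e5]
      _ = (V * 2 ^ a * R ^ ((n:ℝ) - a)) * b ^ ((k:ℝ) * ((n:ℝ) - a)) := by rw [e6]; ring
  -- sum up
  have hsummable : Summable c := by
    apply Summable.congr (f := fun k => (V * 2 ^ a * R ^ ((n:ℝ) - a)) * ρ ^ k)
    · exact (summable_geometric_of_lt_one hρ0.le hρ1).mul_left _
    · intro k; exact (hck k).symm
  have htsum : ∑' k, c k = (V * 2 ^ a * R ^ ((n:ℝ) - a)) * (1 - ρ)⁻¹ := by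
    rw [tsum_congr hck, tsum_mul_left, tsum_geometric_of_lt_one hρ0.le hρ1]
  calc (∫⁻ y in ball x R, f y)
      ≤ (∫⁻ y in ({x} : Set _), f y) + ∫⁻ y in (⋃ k, S k), f y := hmono.trans hsplit
    _ = ∫⁻ y in (⋃ k, S k), f y := by rw [hsing, zero_add]
    _ ≤ ∑' k, ∫⁻ y in S k, f y := hunion
    _ ≤ ∑' k, ENNReal.ofReal (c k) := ENNReal.tsum_le_tsum hshell
    _ = ENNReal.ofReal (∑' k, c k) := (ENNReal.ofReal_tsum_of_nonneg hc0 hsummable).symm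
    _ ≤ ENNReal.ofReal (((V + 1) * 2 ^ a * (1 - ρ)⁻¹) * R ^ ((n:ℝ) - a)) := by
        apply ENNReal.ofReal_le_ofReal
        rw [htsum]
        have hRp : (0:ℝ) < R ^ ((n:ℝ) - a) := Real.rpow_pos_of_pos hR _
        have hρi : (0:ℝ) < (1 - ρ)⁻¹ := inv_pos.mpr h1ρ
        have e7 : (V * 2 ^ a * R ^ ((n:ℝ) - a)) * (1 - ρ)⁻¹
            = V * (2 ^ a * (1 - ρ)⁻¹ * R ^ ((n:ℝ) - a)) := by ring
        have e8 : ((V + 1) * 2 ^ a * (1 - ρ)⁻¹) * R ^ ((n:ℝ) - a)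
            = (V + 1) * (2 ^ a * (1 - ρ)⁻¹ * R ^ ((n:ℝ) - a)) := by ring
        rw [e7, e8]
        exact mul_le_mul_of_nonneg_right (by linarith)
          (le_of_lt (mul_pos (mul_pos h2a hρi) hRp))

/-- **Riesz-potential estimate.**  For `1 < p ≤ ∞` with conjugate exponent `q`
(`1/p + 1/q = 1`) and `0 < s` with `q s < n`, there is a constant `C = C(n,p,q,s)`
such that for every `ω ∈ L¹(U) ∩ Lᵖ(U)`,
`sup_x ∫_U |ω(y)|/|x-y|^s dy ≤ C ‖ω‖_{Lᵖ(U)}^{qs/n} ‖ω‖_{L¹(U)}^{(n-qs)/n}`. -/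
theorem riesz_potential_interpolation_estimate
    (n : ℕ) (hn : 1 ≤ n)
    (U : Set (EuclideanSpace ℝ (Fin n))) (hU : MeasurableSet U)
    (p : ℝ≥0∞) (hp : 1 < p) (q s : ℝ) (hq : 1 ≤ q)
    (hpq : 1 / p + 1 / ENNReal.ofReal q = 1)
    (hs : 0 < s) (hqs : q * s < n) :
    ∃ C > (0 : ℝ),
      ∀ ω : EuclideanSpace ℝ (Fin n) → ℝ,
        IntegrableOn ω U volume →
        MemLp ω p (volume.restrict U) →
        ∀ x : EuclideanSpace ℝ (Fin n),
          (∫⁻ y in U, ENNReal.ofReal (|ω y| / ‖x - y‖ ^ s))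
            ≤ ENNReal.ofReal
                (C * (eLpNorm ω p (volume.restrict U)).toReal ^ (q * s / n)
                   * (∫ y in U, |ω y|) ^ ((n - q * s) / n)) := by
  classical
  have hq0 : (0:ℝ) < q := lt_of_lt_of_le one_pos hq
  have hn0 : (0:ℝ) < n := by exact_mod_cast Nat.lt_of_lt_of_le Nat.zero_lt_one hn
  set a : ℝ := q * s with ha_def
  have ha : 0 < a := mul_pos hq0 hs
  have han : a < n := hqs
  obtain ⟨K, hK, hKb⟩ := ball_rpow_bound' n hn a ha han
  refine ⟨K ^ (1/q) + 1, by positivity, ?_⟩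
  intro ω hint hmem x
  set q' : ℝ≥0∞ := ENNReal.ofReal q with hq'def
  have hq'0 : q' ≠ 0 := (ENNReal.ofReal_pos.mpr hq0).ne'
  have hq'top : q' ≠ ∞ := ENNReal.ofReal_ne_top
  have hq'toReal : q'.toReal = q := ENNReal.toReal_ofReal hq0.le
  have hp0 : p ≠ 0 := (zero_lt_one.trans hp).ne'
  set A : ℝ := ∫ y in U, |ω y| with hA_def
  set B : ℝ := (eLpNorm ω p (volume.restrict U)).toReal with hB_def
  -- degenerate case
  by_cases hzero : ω =ᵐ[volume.restrict U] 0
  · have hLHS : (∫⁻ y in U, ENNReal.ofReal (|ω y| / ‖x - y‖ ^ s)) = 0 := by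
      rw [← lintegral_zero (μ := volume.restrict U)]
      apply lintegral_congr_ae
      filter_upwards [hzero] with y hy
      simp [hy]
    rw [hLHS]; exact zero_le
  -- main case
  have hA : 0 < A := by
    rcases lt_or_eq_of_le (integral_nonneg (fun y => abs_nonneg (ω y)) :
        (0:ℝ) ≤ A) with h | h
    · exact h
    · exfalso
      apply hzero
      have habs : (fun y => |ω y|) =ᵐ[volume.restrict U] 0 :=
        (integral_eq_zero_iff_of_nonneg (fun y => abs_nonneg (ω y)) hint.abs).mp h.symm
      filter_upwards [habs] with y hy
      simpa [abs_eq_zero] using hy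
  have hBfin : eLpNorm ω p (volume.restrict U) ≠ ∞ := hmem.2.ne
  have hB : 0 < B := by
    apply ENNReal.toReal_pos _ hBfin
    intro h0
    exact hzero ((eLpNorm_eq_zero_iff hmem.1 hp0).mp h0)
  have heB : eLpNorm ω p (volume.restrict U) = ENNReal.ofReal B :=
    (ENNReal.ofReal_toReal hBfin).symm
  set R : ℝ := (A / B) ^ (q / n) with hRdef
  have hR : 0 < R := Real.rpow_pos_of_pos (div_pos hA hB) _
  set g : EuclideanSpace ℝ (Fin n) → ℝ := fun y => ‖x - y‖ ^ (-s) with hgdef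
  have hg0 : ∀ y, 0 ≤ g y := fun y => Real.rpow_nonneg (norm_nonneg _) _
  have hpt : ∀ y, ENNReal.ofReal (|ω y| / ‖x - y‖ ^ s)
      = ENNReal.ofReal (|ω y| * g y) := by
    intro y
    show ENNReal.ofReal (|ω y| / ‖x - y‖ ^ s) = ENNReal.ofReal (|ω y| * ‖x - y‖ ^ (-s))
    rw [Real.rpow_neg (norm_nonneg _), div_eq_mul_inv]
  have hgm : Measurable g := by
    have : Measurable fun y : EuclideanSpace ℝ (Fin n) => ‖x - y‖ :=
      (measurable_const.sub measurable_id).norm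
    exact this.pow measurable_const
  -- split
  have hsplit : (∫⁻ y in U ∩ Metric.ball x R, ENNReal.ofReal (|ω y| * g y))
      + (∫⁻ y in U \ Metric.ball x R, ENNReal.ofReal (|ω y| * g y))
      = ∫⁻ y in U, ENNReal.ofReal (|ω y| * g y) :=
    lintegral_inter_add_diff _ U measurableSet_ball
  -- near bound via Hölder
  have hpqr : (1:ℝ≥0∞) / 1 = 1 / p + 1 / q' := by
    rw [hpq]; norm_num
  have hωm' : AEStronglyMeasurable ω (volume.restrict (U ∩ Metric.ball x R)) :=
    hmem.1.mono_measure (Measure.restrict_mono Set.inter_subset_left le_rfl)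
  have hgm' : AEStronglyMeasurable g (volume.restrict (U ∩ Metric.ball x R)) :=
    hgm.aestronglyMeasurable
  have holder := eLpNorm_le_eLpNorm_mul_eLpNorm_of_nnnorm (μ := volume.restrict (U ∩ Metric.ball x R))
    (p := p) (q := q') (r := 1) hωm' hgm' (fun u v => u * v) 1
    (Filter.Eventually.of_forall fun y => by simp [nnnorm_mul])
    (hpqr := ⟨by simpa [one_div] using hpqr.symm⟩)
  have hNeq : (∫⁻ y in U ∩ Metric.ball x R, ENNReal.ofReal (|ω y| * g y))
      = eLpNorm (fun y => ω y * g y) 1 (volume.restrict (U ∩ Metric.ball x R)) := by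
    rw [eLpNorm_one_eq_lintegral_enorm]
    apply lintegral_congr
    intro y
    rw [← ofReal_norm_eq_enorm, Real.norm_eq_abs, abs_mul, abs_of_nonneg (hg0 y)]
  -- eLpNorm of g bound
  have hgq : eLpNorm g q' (volume.restrict (U ∩ Metric.ball x R))
      ≤ ENNReal.ofReal ((K * R ^ ((n:ℝ) - a)) ^ (1/q)) := by
    have h1 : eLpNorm g q' (volume.restrict (U ∩ Metric.ball x R))
        ≤ eLpNorm g q' (volume.restrict (Metric.ball x R)) :=
      eLpNorm_mono_measure _ (Measure.restrict_mono Set.inter_subset_right le_rfl)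
    refine h1.trans ?_
    rw [eLpNorm_eq_lintegral_rpow_enorm_toReal hq'0 hq'top, hq'toReal]
    have h2 : ∀ y, ((‖g y‖₊ : ℝ≥0∞)) ^ q = ENNReal.ofReal (‖x - y‖ ^ (-a)) := by
      intro y
      rw [show ((‖g y‖₊ : ℝ≥0∞)) = ENNReal.ofReal ‖g y‖ from (ofReal_norm_eq_enorm _).symm, Real.norm_eq_abs, abs_of_nonneg (hg0 y),
        ENNReal.ofReal_rpow_of_nonneg (hg0 y) hq0.le]
      congr 1
      show (‖x - y‖ ^ (-s)) ^ q = ‖x - y‖ ^ (-a)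
      rw [← Real.rpow_mul (norm_nonneg _)]
      congr 1
      rw [ha_def]; ring
    have h3 : (∫⁻ y in Metric.ball x R, ((‖g y‖₊ : ℝ≥0∞)) ^ q)
        ≤ ENNReal.ofReal (K * R ^ ((n:ℝ) - a)) := by
      calc (∫⁻ y in Metric.ball x R, ((‖g y‖₊ : ℝ≥0∞)) ^ q)
          = ∫⁻ y in Metric.ball x R, ENNReal.ofReal (‖x - y‖ ^ (-a)) :=
            lintegral_congr h2
        _ ≤ ENNReal.ofReal (K * R ^ ((n:ℝ) - a)) := hKb x R hR
    calc (∫⁻ y in Metric.ball x R, ((‖g y‖₊ : ℝ≥0∞)) ^ q) ^ (1/q)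
        ≤ (ENNReal.ofReal (K * R ^ ((n:ℝ) - a))) ^ (1/q) :=
          ENNReal.rpow_le_rpow h3 (by positivity)
      _ = ENNReal.ofReal ((K * R ^ ((n:ℝ) - a)) ^ (1/q)) :=
          ENNReal.ofReal_rpow_of_nonneg (by positivity) (by positivity)
  have hnear : (∫⁻ y in U ∩ Metric.ball x R, ENNReal.ofReal (|ω y| * g y))
      ≤ ENNReal.ofReal (B * (K * R ^ ((n:ℝ) - a)) ^ (1/q)) := by
    rw [hNeq]
    calc eLpNorm (fun y => ω y * g y) 1 (volume.restrict (U ∩ Metric.ball x R))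
        ≤ eLpNorm ω p (volume.restrict (U ∩ Metric.ball x R))
            * eLpNorm g q' (volume.restrict (U ∩ Metric.ball x R)) := by simpa using holder
      _ ≤ eLpNorm ω p (volume.restrict U)
            * ENNReal.ofReal ((K * R ^ ((n:ℝ) - a)) ^ (1/q)) := by
          exact mul_le_mul' (eLpNorm_mono_measure _
            (Measure.restrict_mono Set.inter_subset_left le_rfl)) hgq
      _ = ENNReal.ofReal (B * (K * R ^ ((n:ℝ) - a)) ^ (1/q)) := by
          rw [heB, ← ENNReal.ofReal_mul ENNReal.toReal_nonneg]
  -- far bound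
  have hfar : (∫⁻ y in U \ Metric.ball x R, ENNReal.ofReal (|ω y| * g y))
      ≤ ENNReal.ofReal (A * R ^ (-s)) := by
    have hRs : (0:ℝ) < R ^ (-s) := Real.rpow_pos_of_pos hR _
    have hb1 : (∫⁻ y in U \ Metric.ball x R, ENNReal.ofReal (|ω y| * g y))
        ≤ ∫⁻ y in U \ Metric.ball x R, ENNReal.ofReal (R ^ (-s)) * ENNReal.ofReal (|ω y|) := by
      apply setLIntegral_mono' (hU.diff measurableSet_ball)
      intro y hy
      have hyx : R ≤ ‖x - y‖ := by
        have : R ≤ dist y x := by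
          have := hy.2
          simpa [Metric.mem_ball, not_lt] using this
        rwa [dist_eq_norm, norm_sub_rev] at this
      have hgy : g y ≤ R ^ (-s) :=
        Real.rpow_le_rpow_of_nonpos hR hyx (neg_nonpos.mpr hs.le)
      rw [← ENNReal.ofReal_mul hRs.le]
      apply ENNReal.ofReal_le_ofReal
      calc |ω y| * g y ≤ |ω y| * R ^ (-s) :=
            mul_le_mul_of_nonneg_left hgy (abs_nonneg _)
        _ = R ^ (-s) * |ω y| := mul_comm _ _
    refine hb1.trans ?_
    rw [lintegral_const_mul' _ _ ENNReal.ofReal_ne_top]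
    have hb2 : (∫⁻ y in U \ Metric.ball x R, ENNReal.ofReal (|ω y|))
        ≤ ∫⁻ y in U, ENNReal.ofReal (|ω y|) :=
      lintegral_mono_set Set.diff_subset
    have hb3 : (∫⁻ y in U, ENNReal.ofReal (|ω y|)) = ENNReal.ofReal A := by
      rw [hA_def]
      exact (ofReal_integral_eq_lintegral_ofReal hint.abs
        (Filter.Eventually.of_forall fun y => abs_nonneg _)).symm
    calc ENNReal.ofReal (R ^ (-s)) * ∫⁻ y in U \ Metric.ball x R, ENNReal.ofReal (|ω y|)
        ≤ ENNReal.ofReal (R ^ (-s)) * ENNReal.ofReal A := by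
          gcongr
          rw [← hb3]; exact hb2
      _ = ENNReal.ofReal (A * R ^ (-s)) := by
          rw [← ENNReal.ofReal_mul hRs.le, mul_comm]
  -- real arithmetic
  have hRt : ∀ t : ℝ, R ^ t = A ^ (q * t / n) * B ^ (-(q * t / n)) := by
    intro t
    rw [hRdef, ← Real.rpow_mul (le_of_lt (div_pos hA hB)),
      Real.div_rpow hA.le hB.le, Real.rpow_neg hB.le]
    rw [show q / n * t = q * t / n by ring, div_eq_mul_inv]
  have hT1 : B * (K * R ^ ((n:ℝ) - a)) ^ (1/q)
      = K ^ (1/q) * (A ^ (((n:ℝ) - a)/n) * B ^ (a/n)) := by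
    rw [Real.mul_rpow hK.le (Real.rpow_nonneg hR.le _),
      ← Real.rpow_mul hR.le, hRt (((n:ℝ) - a) * (1/q))]
    rw [show q * (((n:ℝ) - a) * (1/q)) / n = ((n:ℝ) - a)/n by field_simp]
    have : B * B ^ (-((((n:ℝ) - a))/n)) = B ^ (a/n) := by
      nth_rewrite 1 [← Real.rpow_one B]
      rw [← Real.rpow_add hB]
      congr 1
      field_simp
      ring
    calc B * (K ^ (1/q) * (A ^ (((n:ℝ) - a)/n) * B ^ (-(((n:ℝ) - a)/n))))
        = K ^ (1/q) * (A ^ (((n:ℝ) - a)/n) * (B * B ^ (-(((n:ℝ) - a)/n)))) := by ring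
      _ = K ^ (1/q) * (A ^ (((n:ℝ) - a)/n) * B ^ (a/n)) := by rw [this]
  have hT2 : A * R ^ (-s) = A ^ (((n:ℝ) - a)/n) * B ^ (a/n) := by
    rw [hRt (-s)]
    rw [show q * (-s) / n = -(a/n) by rw [ha_def]; ring]
    rw [neg_neg]
    have : A * A ^ (-(a/n)) = A ^ (((n:ℝ) - a)/n) := by
      nth_rewrite 1 [← Real.rpow_one A]
      rw [← Real.rpow_add hA]
      congr 1
      field_simp
      ring
    calc A * (A ^ (-(a/n)) * B ^ (a/n)) = (A * A ^ (-(a/n))) * B ^ (a/n) := by ring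
      _ = A ^ (((n:ℝ) - a)/n) * B ^ (a/n) := by rw [this]
  -- conclude
  calc (∫⁻ y in U, ENNReal.ofReal (|ω y| / ‖x - y‖ ^ s))
      = ∫⁻ y in U, ENNReal.ofReal (|ω y| * g y) := lintegral_congr hpt
    _ = (∫⁻ y in U ∩ Metric.ball x R, ENNReal.ofReal (|ω y| * g y))
        + (∫⁻ y in U \ Metric.ball x R, ENNReal.ofReal (|ω y| * g y)) := hsplit.symm
    _ ≤ ENNReal.ofReal (B * (K * R ^ ((n:ℝ) - a)) ^ (1/q))
        + ENNReal.ofReal (A * R ^ (-s)) := add_le_add hnear hfar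
    _ = ENNReal.ofReal (B * (K * R ^ ((n:ℝ) - a)) ^ (1/q) + A * R ^ (-s)) := by
        rw [← ENNReal.ofReal_add (by positivity) (by positivity)]
    _ ≤ ENNReal.ofReal ((K ^ (1/q) + 1) * B ^ (q * s / n) * A ^ (((n:ℝ) - q * s)/n)) := by
        apply ENNReal.ofReal_le_ofReal
        rw [hT1, hT2, ← ha_def]
        have : a / n = q * s / n := by rw [ha_def]
        rw [← this]
        ring_nf
        exact le_refl _
end
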